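/- Given f : ℝ → ℝ with f(r) ≠ 0 for every rational r ∈ [0,1], the function g_f is almost continuous in the sense of Husain: for every x ∈ ℝ and every open set G ⊆ ℝ containing g_f(x), the closure of the preimage {y ∈ ℝ : g_f(y) ∈ G} is a neighbourhood of x (in fact it equals ℝ). -/
import Mathlib


open Topology

open Classical in
/-- The function `g_f`. -/
noncomputable def gf (f : ℝ → ℝ) (x : ℝ) : ℝ :=
  if ∃ q : ℚ, x + (q : ℝ) ∈ Set.Icc (0:ℝ) 1 ∧ f (x + (q : ℝ)) = 0 then 1 else 0

lemma gf_add_rat (f : ℝ → ℝ) (x : ℝ) (q : ℚ) : gf f (x + (q : ℝ)) = gf f x := by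
  classical
  unfold gf
  congr 1
  apply propext
  constructor
  · rintro ⟨q', hq'⟩
    refine ⟨q + q', ?_⟩
    have e : x + ((q + q' : ℚ) : ℝ) = x + ↑q + ↑q' := by push_cast; ring
    rw [e]; exact hq'
  · rintro ⟨q', hq'⟩
    refine ⟨q' - q, ?_⟩
    have e : x + ↑q + ((q' - q : ℚ) : ℝ) = x + ↑q' := by push_cast; ring
    rw [e]; exact hq'

lemma dense_rat_translate (x : ℝ) : Dense (Set.range (fun q : ℚ => x + (q : ℝ))) :=
  DenseRange.comp ((Homeomorph.addLeft x).surjective.denseRange) Rat.denseRange_cast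
    (continuous_add_left x)

theorem gf_almost_continuous_husain (f : ℝ → ℝ)
    (hf : ∀ r : ℚ, (r : ℝ) ∈ Set.Icc (0:ℝ) 1 → f r ≠ 0) :
    ∀ x : ℝ, ∀ G : Set ℝ, IsOpen G → gf f x ∈ G →
      closure {y : ℝ | gf f y ∈ G} ∈ 𝓝 x ∧
        closure {y : ℝ | gf f y ∈ G} = Set.univ := by
  intro x G _ hxG
  have hsub : Set.range (fun q : ℚ => x + (q : ℝ)) ⊆ {y : ℝ | gf f y ∈ G} := by
    rintro y ⟨q, rfl⟩
    simp only [Set.mem_setOf_eq, gf_add_rat]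
    exact hxG
  have hdense : Dense {y : ℝ | gf f y ∈ G} :=
    (dense_rat_translate x).mono hsub
  have hcl : closure {y : ℝ | gf f y ∈ G} = Set.univ := hdense.closure_eq
  refine ⟨?_, hcl⟩
  rw [hcl]
  exact Filter.univ_mem
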